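/- Let M be a nonempty compact topological space, let T > 0, and let h : M × [0,T] → ℝ be continuous. Assume that for every x ∈ M the function t ↦ h(x,t) has at every t₀ ∈ (0,T] a (left) derivative ∂ₜh(x,t₀), and assume that for every t₀ ∈ (0,T] and every x₀ ∈ M such that h(x₀,t₀) = max_{x∈M} h(x,t₀), one has ∂ₜh(x₀,t₀) ≤ 0. Then sup_{(x,t)∈M×[0,T]} h(x,t) = max_{x∈M} h(x,0). -/

import Mathlib

/-- Abstract core of the maximum principle for basic maps (Proposition 5):
let `M` be a nonempty compact space, `T > 0`, `h : M × [0,T] → ℝ` continuous,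
such that for every `x` the map `t ↦ h x t` has left derivative `d x t₀` at every
`t₀ ∈ (0,T]`, and assume `d x₀ t₀ ≤ 0` whenever `x₀` realizes the spatial maximum
of `h (·) t₀` for `t₀ ∈ (0,T]`.  Then the supremum of `h` over `M × [0,T]` equals
the maximum of `h (·) 0` over `M`. -/
theorem maximum_principle_core {M : Type*} [TopologicalSpace M] [CompactSpace M]
    [Nonempty M] (T : ℝ) (hT : 0 < T) (h : M → ℝ → ℝ) (d : M → ℝ → ℝ)
    (hcont : ContinuousOn (fun p : M × ℝ => h p.1 p.2) (Set.univ ×ˢ Set.Icc 0 T))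
    (hderiv : ∀ x : M, ∀ t₀ ∈ Set.Ioc (0 : ℝ) T,
      HasDerivWithinAt (h x) (d x t₀) (Set.Icc 0 t₀) t₀)
    (hmax : ∀ t₀ ∈ Set.Ioc (0 : ℝ) T, ∀ x₀ : M,
      (∀ x : M, h x t₀ ≤ h x₀ t₀) → d x₀ t₀ ≤ 0) :
    (⨆ p : M × Set.Icc (0 : ℝ) T, h p.1 p.2) = ⨆ x : M, h x 0 := by
  haveI : Nonempty (Set.Icc (0:ℝ) T) := ⟨⟨0, le_refl 0, hT.le⟩⟩
  -- continuity of the restricted function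
  have hincl : Continuous (fun p : M × Set.Icc (0 : ℝ) T => ((p.1, (p.2 : ℝ)) : M × ℝ)) :=
    continuous_fst.prodMk (continuous_subtype_val.comp continuous_snd)
  have hcont' : Continuous (fun p : M × Set.Icc (0 : ℝ) T => h p.1 p.2) := by
    apply hcont.comp_continuous hincl
    intro p
    exact ⟨Set.mem_univ _, p.2.2⟩
  have hcont0 : Continuous (fun x : M => h x 0) := by
    have : Continuous (fun x : M => ((x, (0:ℝ)) : M × ℝ)) :=
      continuous_id.prodMk continuous_const
    exact hcont.comp_continuous this (fun x => ⟨Set.mem_univ _, Set.left_mem_Icc.2 hT.le⟩)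
  have hbdd : BddAbove (Set.range fun p : M × Set.Icc (0 : ℝ) T => h p.1 p.2) :=
    (isCompact_range hcont').bddAbove
  have hbdd0 : BddAbove (Set.range fun x : M => h x 0) :=
    (isCompact_range hcont0).bddAbove
  -- the key perturbation estimate
  have key : ∀ lam : ℝ, 0 < lam → ∀ x : M, ∀ t ∈ Set.Icc (0:ℝ) T,
      h x t ≤ (⨆ x : M, h x 0) + lam * T := by
    intro lam hlam x t ht
    -- maximize the perturbed function on the compact product
    set g : M × Set.Icc (0 : ℝ) T → ℝ := fun p => h p.1 p.2 - lam * p.2 with hg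
    have hgcont : Continuous g :=
      hcont'.sub (continuous_const.mul (continuous_subtype_val.comp continuous_snd))
    obtain ⟨p₀, -, hp₀⟩ :=
      isCompact_univ.exists_isMaxOn Set.univ_nonempty hgcont.continuousOn
    have hp₀' : ∀ p, g p ≤ g p₀ := fun p => hp₀ (Set.mem_univ p)
    obtain ⟨x₀, t₀, ht₀⟩ : ∃ x₀ t₀, p₀ = (x₀, t₀) := ⟨p₀.1, p₀.2, rfl⟩
    subst ht₀
    rcases eq_or_lt_of_le t₀.2.1 with h0 | hpos
    · -- maximum at time 0
      have hle : h x t - lam * t ≤ h x₀ 0 := by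
        have := hp₀' (x, ⟨t, ht⟩)
        simpa [g, ← h0] using this
      have : h x₀ 0 ≤ ⨆ x : M, h x 0 := le_ciSup hbdd0 x₀
      nlinarith [ht.1, ht.2]
    · -- maximum at positive time: contradiction
      exfalso
      have ht₀Ioc : (t₀ : ℝ) ∈ Set.Ioc (0:ℝ) T := ⟨hpos, t₀.2.2⟩
      have hspatial : ∀ y : M, h y t₀ ≤ h x₀ t₀ := by
        intro y
        have := hp₀' (y, t₀)
        simpa [g] using this
      have hdle : d x₀ t₀ ≤ 0 := hmax t₀ ht₀Ioc x₀ hspatial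
      -- the perturbed time-function has a max at the right endpoint t₀
      set f : ℝ → ℝ := fun s => h x₀ s - lam * s with hf
      have hmaxOn : IsMaxOn f (Set.Icc 0 (t₀:ℝ)) (t₀:ℝ) := by
        intro s hs
        have hsIcc : s ∈ Set.Icc (0:ℝ) T := ⟨hs.1, hs.2.trans t₀.2.2⟩
        have := hp₀' (x₀, ⟨s, hsIcc⟩)
        simpa [g, f] using this
      have hfderiv : HasDerivWithinAt f (d x₀ t₀ - lam) (Set.Icc 0 (t₀:ℝ)) t₀ := by
        exact (hderiv x₀ t₀ ht₀Ioc).sub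
          (((hasDerivAt_id (t₀:ℝ)).const_mul lam).hasDerivWithinAt.congr_deriv (by ring))
      -- -t₀ lies in the positive tangent cone of [0,t₀] at t₀
      have hcone : (-(t₀:ℝ)) ∈ posTangentConeAt (Set.Icc 0 (t₀:ℝ)) (t₀:ℝ) := by
        apply mem_posTangentConeAt_of_segment_subset
        rw [show (t₀:ℝ) + -(t₀:ℝ) = 0 by ring]
        rw [segment_symm, segment_eq_Icc hpos.le]
      have hlocal : IsLocalMaxOn f (Set.Icc 0 (t₀:ℝ)) (t₀:ℝ) :=
        hmaxOn.filter_mono inf_le_right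
      have hkey := hlocal.hasFDerivWithinAt_nonpos hfderiv.hasFDerivWithinAt hcone
      simp only [ContinuousLinearMap.toSpanSingleton_apply,
        smul_eq_mul] at hkey
      nlinarith
  refine le_antisymm ?_ ?_
  · refine ciSup_le fun p => ?_
    refine le_of_forall_pos_le_add fun ε hε => ?_
    have := key (ε / T) (div_pos hε hT) p.1 p.2 p.2.2
    have hεT : ε / T * T = ε := div_mul_cancel₀ ε hT.ne'
    linarith [this, hεT.ge]
  · refine ciSup_le fun x => ?_
    exact le_ciSup hbdd (⟨x, ⟨0, le_refl 0, hT.le⟩⟩ : M × Set.Icc (0:ℝ) T)
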